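/- Let π_s = w(s)·N(0, s) + (1-w(s))·N(sm, s) on ℝ, where w(s) = 1/(1 + exp(-(1-s)m²/2)), s ∈ [0.9, 0.99], and m is sufficiently large. Then for all x in the interval [m/2 - 0.1, m/2 + 0.1], the density f_s(x) satisfies f_s(x) ≤ C·exp(-m²/8) for some universal constant C. -/

import Mathlib

open Real

set_option maxHeartbeats 1000000 in
/-- For the Gaussian mixture `π_s = w(s)·N(0,s) + (1-w(s))·N(sm,s)` with
`w(s) = 1/(1+exp(-(1-s)m²/2))`, for all sufficiently large `m`, all `s ∈ [0.9, 0.99]`, and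
all `x ∈ [m/2 - 0.1, m/2 + 0.1]`, the density satisfies `f_s(x) ≤ C·exp(-m²/8)` for a
universal constant `C`. -/
theorem mixture_density_bound_near_midpoint :
    ∃ C > (0 : ℝ), ∃ m₀ : ℝ, ∀ m ≥ m₀, ∀ s ∈ Set.Icc (0.9 : ℝ) 0.99,
      ∀ x ∈ Set.Icc (m / 2 - 0.1) (m / 2 + 0.1),
        (1 / (1 + Real.exp (-(1 - s) * m ^ 2 / 2))) / Real.sqrt s *
            ((Real.sqrt (2 * π))⁻¹ * Real.exp (-(x / Real.sqrt s) ^ 2 / 2)) +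
          (1 - 1 / (1 + Real.exp (-(1 - s) * m ^ 2 / 2))) / Real.sqrt s *
            ((Real.sqrt (2 * π))⁻¹ * Real.exp (-((x - s * m) / Real.sqrt s) ^ 2 / 2)) ≤
        C * Real.exp (-m ^ 2 / 8) := by
  refine ⟨2, by norm_num, 100, fun m hm s hs x hx => ?_⟩
  obtain ⟨hs1, hs2⟩ := hs
  obtain ⟨hx1, hx2⟩ := hx
  have hm2 : (100:ℝ) ≤ m := hm
  have hspos : (0:ℝ) < s := by linarith
  have hsq : (0.9:ℝ) ≤ Real.sqrt s := by
    have h := Real.sqrt_le_sqrt (show (0.81:ℝ) ≤ s by linarith)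
    rwa [show (0.81:ℝ) = 0.9 ^ 2 by norm_num, Real.sqrt_sq (by norm_num)] at h
  have hsqpos : (0:ℝ) < Real.sqrt s := by linarith
  have h2pi : (2:ℝ) ≤ Real.sqrt (2 * π) := by
    have h := Real.sqrt_le_sqrt (show (4:ℝ) ≤ 2 * π by nlinarith [Real.pi_gt_three])
    rwa [show (4:ℝ) = 2 ^ 2 by norm_num, Real.sqrt_sq (by norm_num)] at h
  have hsqs : Real.sqrt s ^ 2 = s := Real.sq_sqrt hspos.le
  set E := Real.exp (-(1 - s) * m ^ 2 / 2) with hE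
  have hEpos : 0 < E := Real.exp_pos _
  -- w ≤ 1
  have hw : 1 / (1 + E) ≤ 1 := by
    rw [div_le_one (by linarith)]; linarith
  have hwpos : 0 < 1 / (1 + E) := by positivity
  -- 1 - w ≤ E
  have hw2 : 1 - 1 / (1 + E) ≤ E := by
    have heq : 1 - 1 / (1 + E) = E / (1 + E) := by field_simp; ring
    rw [heq]
    exact div_le_self hEpos.le (by linarith)
  have hw2pos : 0 ≤ 1 - 1 / (1 + E) := by
    have : 1 / (1 + E) ≤ 1 := hw
    linarith
  -- first exponential bound
  have he1 : Real.exp (-(x / Real.sqrt s) ^ 2 / 2) ≤ Real.exp (-m ^ 2 / 8) := by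
    apply Real.exp_le_exp.mpr
    have hx2s : (x / Real.sqrt s) ^ 2 = x ^ 2 / s := by rw [div_pow, hsqs]
    rw [hx2s]
    have hxpos : (0:ℝ) < x := by linarith
    have key : s * m ^ 2 ≤ 4 * x ^ 2 := by
      nlinarith [mul_nonneg (show (0:ℝ) ≤ x - (m/2 - 0.1) by linarith)
          (show (0:ℝ) ≤ x + (m/2 - 0.1) by linarith),
        mul_nonneg (show (0:ℝ) ≤ 0.99 - s by linarith) (sq_nonneg m),
        mul_nonneg (show (0:ℝ) ≤ m - 100 by linarith) (show (0:ℝ) ≤ m by linarith)]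
    have h1 : m ^ 2 / 8 ≤ x ^ 2 / s / 2 := by
      rw [div_div, div_le_div_iff₀ (by norm_num) (by positivity)]
      nlinarith [key]
    linarith
  -- second: combined exponential bound
  have he2 : E * Real.exp (-((x - s * m) / Real.sqrt s) ^ 2 / 2) ≤ Real.exp (-m ^ 2 / 8) := by
    rw [hE, ← Real.exp_add]
    apply Real.exp_le_exp.mpr
    have hx2s : ((x - s * m) / Real.sqrt s) ^ 2 = (x - s * m) ^ 2 / s := by rw [div_pow, hsqs]
    rw [hx2s]
    have hd : (0:ℝ) ≤ (s - 1/2) * m - 0.1 := by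
      have h40 : (0.4:ℝ) * 100 ≤ (s - 1/2) * m :=
        mul_le_mul (by linarith) hm2 (by norm_num) (by linarith)
      linarith
    have h1 : (s - 1/2) * m - 0.1 ≤ s * m - x := by
      have hid : (s - 1/2) * m = s * m - m / 2 := by ring
      linarith
    have hkey : ((s - 1/2) * m - 0.1) ^ 2 ≤ (x - s * m) ^ 2 := by
      have h2 : ((s - 1/2) * m - 0.1) ^ 2 ≤ (s * m - x) ^ 2 := pow_le_pow_left₀ hd h1 2
      have h3 : (s * m - x) ^ 2 = (x - s * m) ^ 2 := by ring
      linarith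
    have hA : ((s - 1/2) * m - 0.1) ^ 2 / s ≤ (x - s * m) ^ 2 / s := by
      apply div_le_div_of_nonneg_right hkey hspos.le
    have key : s * m ^ 2 ≤ 4 * s * (1 - s) * m ^ 2 + 4 * ((s - 1/2) * m - 0.1) ^ 2 := by
      nlinarith [mul_nonneg (show (0:ℝ) ≤ 0.99 - s by linarith) (sq_nonneg m),
        mul_nonneg (show (0:ℝ) ≤ m - 100 by linarith) (show (0:ℝ) ≤ m by linarith)]
    have h3 : m ^ 2 / 8 - (1 - s) * m ^ 2 / 2 ≤ ((s - 1/2) * m - 0.1) ^ 2 / (2 * s) := by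
      rw [le_div_iff₀ (by positivity)]
      nlinarith [key]
    have h4 : ((s - 1/2) * m - 0.1) ^ 2 / (2 * s) = (((s - 1/2) * m - 0.1) ^ 2 / s) / 2 := by
      ring
    rw [h4] at h3
    have h5 : (((s - 1/2) * m - 0.1) ^ 2 / s) / 2 ≤ ((x - s * m) ^ 2 / s) / 2 := by linarith
    linarith
  -- assemble
  have hi : (Real.sqrt (2 * π))⁻¹ ≤ 1 / 2 := by
    rw [inv_le_comm₀ (by linarith) (by norm_num)]
    linarith
  have hipos : (0:ℝ) ≤ (Real.sqrt (2 * π))⁻¹ := by positivity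
  have he1pos : (0:ℝ) ≤ Real.exp (-(x / Real.sqrt s) ^ 2 / 2) := (Real.exp_pos _).le
  have he2pos : (0:ℝ) ≤ Real.exp (-((x - s * m) / Real.sqrt s) ^ 2 / 2) := (Real.exp_pos _).le
  have hexppos : (0:ℝ) < Real.exp (-m ^ 2 / 8) := Real.exp_pos _
  -- term 1
  have hA1 : (1 / (1 + E)) / Real.sqrt s ≤ 10/9 := by
    rw [div_le_iff₀ hsqpos]
    nlinarith
  have hB1 : (Real.sqrt (2 * π))⁻¹ * Real.exp (-(x / Real.sqrt s) ^ 2 / 2) ≤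
      (1/2) * Real.exp (-m ^ 2 / 8) := by
    apply mul_le_mul hi he1 he1pos (by norm_num)
  have ht1 : (1 / (1 + E)) / Real.sqrt s *
      ((Real.sqrt (2 * π))⁻¹ * Real.exp (-(x / Real.sqrt s) ^ 2 / 2)) ≤
      (10/9) * ((1/2) * Real.exp (-m ^ 2 / 8)) := by
    apply mul_le_mul hA1 hB1 (by positivity) (by norm_num)
  -- term 2
  have hA2 : (1 - 1 / (1 + E)) / Real.sqrt s ≤ (10/9) * E := by
    rw [div_le_iff₀ hsqpos]
    nlinarith [mul_le_mul_of_nonneg_left hsq hEpos.le]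
  have hB2 : (Real.sqrt (2 * π))⁻¹ * Real.exp (-((x - s * m) / Real.sqrt s) ^ 2 / 2) ≤
      (1/2) * Real.exp (-((x - s * m) / Real.sqrt s) ^ 2 / 2) := by
    apply mul_le_mul_of_nonneg_right hi he2pos
  have ht2 : (1 - 1 / (1 + E)) / Real.sqrt s *
      ((Real.sqrt (2 * π))⁻¹ * Real.exp (-((x - s * m) / Real.sqrt s) ^ 2 / 2)) ≤
      ((10/9) * E) * ((1/2) * Real.exp (-((x - s * m) / Real.sqrt s) ^ 2 / 2)) := by
    apply mul_le_mul hA2 hB2 (by positivity) (by positivity)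
  have ht2' : ((10/9) * E) * ((1/2) * Real.exp (-((x - s * m) / Real.sqrt s) ^ 2 / 2)) ≤
      (5/9) * Real.exp (-m ^ 2 / 8) := by
    have := he2
    nlinarith [he2, hEpos, he2pos]
  linarith [ht1, ht2, ht2', hexppos]
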